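/- Let φ ∈ O(V,Q) and let T be a totally isotropic φ-invariant subspace of V with 2·dim T = dim V. Then φ ∈ SO(V,Q), i.e. dim(im(φ − 1)) is even. -/

import Mathlib

open Polynomial Module

variable {K V : Type*}

section Defs

variable [Field K] [AddCommGroup V] [Module K V]

/-- The polar form `f_Q(u,w) = Q(u+w) - Q u - Q w` of a quadratic form. -/
def polarF (Q : QuadraticForm K V) (u w : V) : K := Q (u + w) - Q u - Q w

/-- `Q` is nondefective: its polar form is nondegenerate. -/
def Nondefective (Q : QuadraticForm K V) : Prop :=
  ∀ u : V, (∀ w : V, polarF Q u w = 0) → u = 0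

/-- Membership in the orthogonal group `O(V,Q)`. -/
def InO (Q : QuadraticForm K V) (φ : V ≃ₗ[K] V) : Prop := ∀ v : V, Q (φ v) = Q v

/-- Membership in the special orthogonal group `SO(V,Q)`:
orthogonal and `dim im(φ - 1)` is even. -/
def InSO (Q : QuadraticForm K V) (φ : V ≃ₗ[K] V) : Prop :=
  InO Q φ ∧ Even (Module.finrank K (LinearMap.range (φ.toLinearMap - LinearMap.id)))

/-- `φ` is a product of two involutions of `SO(V,Q)`. -/
def BireflSO (Q : QuadraticForm K V) (φ : V ≃ₗ[K] V) : Prop :=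
  ∃ σ τ : V ≃ₗ[K] V, InSO Q σ ∧ InSO Q τ ∧ σ * σ = 1 ∧ τ * τ = 1 ∧ φ = σ * τ

/-- A subspace is totally isotropic if `Q` vanishes on it. -/
def TotIsotropic (Q : QuadraticForm K V) (U : Submodule K V) : Prop := ∀ u ∈ U, Q u = 0

/-- A subspace invariant under a linear map. -/
def Invariant (f : V →ₗ[K] V) (U : Submodule K V) : Prop := ∀ u ∈ U, f u ∈ U

/-- The restriction of the polar form of `Q` to `U` is nondegenerate. -/
def NondegOn (Q : QuadraticForm K V) (U : Submodule K V) : Prop :=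
  ∀ u ∈ U, (∀ w ∈ U, polarF Q u w = 0) → u = 0

/-- `f` is orthogonally indecomposable: no invariant subspace `W` with
`0 < dim W < dim V` on which the polar form of `Q` is nondegenerate. -/
def OrthIndec (Q : QuadraticForm K V) (f : V →ₗ[K] V) : Prop :=
  ¬ ∃ W : Submodule K V, Invariant f W ∧ 0 < Module.finrank K W ∧
      Module.finrank K W < Module.finrank K V ∧ NondegOn Q W

/-- The subspace spanned by the `f`-orbit of `x`. -/
def cyclicSpan (f : V →ₗ[K] V) (x : V) : Submodule K V :=
  Submodule.span K (Set.range fun k : ℕ => (f ^ k) x)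

/-- `f` is a cyclic linear map. -/
def IsCyclicEnd (f : V →ₗ[K] V) : Prop := ∃ x : V, cyclicSpan f x = ⊤

/-- `f` is of type 1 with exponent `m`: orthogonally indecomposable, bicyclic, and
with minimal polynomial `(X - 1) ^ m`. -/
def IsType1 (Q : QuadraticForm K V) (f : V →ₗ[K] V) (m : ℕ) : Prop :=
  OrthIndec Q f ∧ 1 ≤ m ∧ minpoly K f = (X - 1) ^ m ∧
    ∃ x z : V, IsCompl (cyclicSpan f x) (cyclicSpan f z)

/-- Type 1o: type 1 with odd exponent. -/
def IsType1o (Q : QuadraticForm K V) (f : V →ₗ[K] V) : Prop :=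
  ∃ m : ℕ, IsType1 Q f m ∧ Odd m

/-- Type 1e: type 1 with even exponent. -/
def IsType1e (Q : QuadraticForm K V) (f : V →ₗ[K] V) : Prop :=
  ∃ m : ℕ, IsType1 Q f m ∧ Even m

/-- The quadratic space `(V,Q)` is hyperbolic. -/
def HyperbolicSpace (Q : QuadraticForm K V) : Prop :=
  ∃ U W : Submodule K V, TotIsotropic Q U ∧ TotIsotropic Q W ∧ IsCompl U W

/-- The transformation `f` is hyperbolic: `V` is a direct sum of two totally isotropic
`f`-invariant subspaces. -/
def HyperbolicMap (Q : QuadraticForm K V) (f : V →ₗ[K] V) : Prop :=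
  ∃ U W : Submodule K V, TotIsotropic Q U ∧ TotIsotropic Q W ∧
    Invariant f U ∧ Invariant f W ∧ IsCompl U W

/-- `f` is semisimple: every invariant subspace has an invariant complement. -/
def SemisimpleEnd (f : V →ₗ[K] V) : Prop :=
  ∀ U : Submodule K V, Invariant f U → ∃ W : Submodule K V, Invariant f W ∧ IsCompl U W

end Defs


universe u v

/-- A nondegenerate alternating bilinear form exists only on even-dimensional spaces. -/
private theorem alt_nondeg_even_aux (K : Type u) [Field K] :
    ∀ (n : ℕ) (M : Type v) [AddCommGroup M] [Module K M] [FiniteDimensional K M],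
      Module.finrank K M ≤ n → ∀ B : LinearMap.BilinForm K M, B.IsAlt →
        B.Nondegenerate → Even (Module.finrank K M) := by
  intro n
  induction n with
  | zero =>
    intro M _ _ _ hle B _ _
    exact ⟨0, by omega⟩
  | succ n ih =>
    intro M _ _ _ hle B halt hnd
    rcases Nat.eq_zero_or_pos (Module.finrank K M) with h0 | h0
    · exact ⟨0, by omega⟩
    have : Nontrivial M := Module.nontrivial_of_finrank_pos h0
    obtain ⟨x, hx⟩ := exists_ne (0 : M)
    have hex : ¬ ∀ y, B x y = 0 := fun h => hx (hnd.1 x h)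
    push_neg at hex
    obtain ⟨y₀, hy₀⟩ := hex
    obtain ⟨y, hxy⟩ : ∃ y : M, B x y = 1 :=
      ⟨(B x y₀)⁻¹ • y₀, by rw [map_smul, smul_eq_mul, inv_mul_cancel₀ hy₀]⟩
    have hyx : B y x = -1 := by
      have h := LinearMap.IsAlt.neg halt x y
      rw [hxy] at h
      exact h.symm
    -- x and y are linearly independent
    have hli : LinearIndependent K ![x, y] := by
      rw [LinearIndependent.pair_iff' hx]
      intro a ha
      rw [← ha, map_smul, smul_eq_mul, halt.self_eq_zero, mul_zero] at hxy
      exact one_ne_zero hxy.symm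
    set P : Submodule K M := Submodule.span K {x, y} with hP
    have hPrank : Module.finrank K P = 2 := by
      have := finrank_span_eq_card hli
      rw [show Set.range ![x, y] = {x, y} by
        simp only [Matrix.range_cons, Matrix.range_empty, Set.union_empty,
          Set.union_singleton]
        exact Set.pair_comm y x] at this
      rw [hP, this]
      simp
    have hxP : x ∈ P := Submodule.subset_span (by simp)
    have hyP : y ∈ P := Submodule.subset_span (by simp)
    have hPnd : (B.restrict P).Nondegenerate := by
      refine (LinearMap.IsRefl.nondegenerate_iff_separatingLeft
        (show (B.restrict P).IsAlt from fun z => halt z).isRefl).mpr ?_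
      rintro ⟨p, hp⟩ hpz
      obtain ⟨a, b, hab⟩ := Submodule.mem_span_pair.mp hp
      have h1 : B p y = 0 := hpz ⟨y, hyP⟩
      have h2 : B p x = 0 := hpz ⟨x, hxP⟩
      rw [← hab] at h1 h2
      simp only [map_add, map_smul, LinearMap.add_apply, LinearMap.smul_apply, hxy,
        halt.self_eq_zero, hyx, smul_eq_mul, mul_one, mul_zero, add_zero, zero_add,
        mul_neg_one, neg_eq_zero] at h1 h2
      ext
      show p = 0
      rw [← hab, h1, h2, zero_smul, zero_smul, add_zero]
    have hcompl : IsCompl P (B.orthogonal P) :=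
      LinearMap.BilinForm.isCompl_orthogonal_of_restrict_nondegenerate halt.isRefl hPnd
    have hsum : Module.finrank K P + Module.finrank K (B.orthogonal P) = Module.finrank K M :=
      Submodule.finrank_add_eq_of_isCompl hcompl
    have hOnd : (B.restrict (B.orthogonal P)).Nondegenerate := by
      apply B.nondegenerate_restrict_of_disjoint_orthogonal halt.isRefl
      rw [LinearMap.BilinForm.orthogonal_orthogonal hnd halt.isRefl]
      exact hcompl.disjoint.symm
    have hOalt : (B.restrict (B.orthogonal P)).IsAlt := fun z => halt z
    have hle' : Module.finrank K (B.orthogonal P) ≤ n := by omega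
    have := ih (B.orthogonal P) hle' _ hOalt hOnd
    obtain ⟨m, hm⟩ := this
    exact ⟨m + 1, by omega⟩


theorem stmt16 [Field K] [AddCommGroup V] [Module K V] [FiniteDimensional K V]
    (Q : QuadraticForm K V) (hQ : Nondefective Q)
    (φ : V ≃ₗ[K] V) (hO : InO Q φ)
    (T : Submodule K V) (hT : TotIsotropic Q T) (hinv : Invariant φ.toLinearMap T)
    (hdim : 2 * Module.finrank K T = Module.finrank K V) :
    Even (Module.finrank K (LinearMap.range (φ.toLinearMap - LinearMap.id))) := by

  classical
  set f : V →ₗ[K] V := φ.toLinearMap - LinearMap.id with hf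
  set B : LinearMap.BilinForm K V := QuadraticMap.polarBilin Q with hBdef
  have hBapp : ∀ u w : V, B u w = Q (u + w) - Q u - Q w := fun u w => rfl
  have hsymm : ∀ u w : V, B u w = B w u := fun u w => by
    rw [hBapp, hBapp, add_comm]
    ring
  have hrefl : B.IsRefl := fun u w h => by rw [hsymm]; exact h
  have hnd : B.Nondegenerate :=
    (LinearMap.IsRefl.nondegenerate_iff_separatingLeft hrefl).mpr (fun u h => hQ u h)
  have hfapp : ∀ u : V, f u = φ u - u := fun u => rfl
  have hphif : ∀ u : V, φ u = u + f u := fun u => by rw [hfapp]; abel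
  have hiso : ∀ u w : V, B (φ u) (φ w) = B u w := by
    intro u w
    rw [hBapp, hBapp, ← map_add φ, hO, hO, hO]
  have hkey : ∀ u w : V, B (f u) w + B u (f w) + B (f u) (f w) = 0 := by
    intro u w
    have h := hiso u w
    rw [hphif u, hphif w] at h
    simp only [map_add, LinearMap.add_apply] at h
    linear_combination h
  -- T is in its own orthogonal
  have hTzero : ∀ a ∈ T, ∀ b ∈ T, B a b = 0 := by
    intro a ha b hb
    rw [hBapp, hT a ha, hT b hb, hT (a + b) (T.add_mem ha hb), sub_zero, sub_zero]
  have hfT : ∀ t ∈ T, f t ∈ T := by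
    intro t ht
    rw [hfapp]
    exact T.sub_mem (hinv t ht) ht
  -- dimensions
  set n := Module.finrank K V with hn
  have hTle : T ≤ B.orthogonal T := fun t ht => by
    intro a ha
    exact hTzero a ha t ht
  have hTfin : Module.finrank K T ≤ n := Submodule.finrank_le T
  have hTorth : B.orthogonal T = T := by
    refine (Submodule.eq_of_le_of_finrank_le hTle ?_).symm
    rw [LinearMap.BilinForm.finrank_orthogonal hnd T]
    omega
  -- the orthogonal of the range of f is the kernel of f
  have horthW : B.orthogonal (LinearMap.range f) = LinearMap.ker f := by
    ext v
    simp only [LinearMap.BilinForm.mem_orthogonal_iff, LinearMap.BilinForm.isOrtho_def,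
      LinearMap.mem_ker]
    constructor
    · intro hv
      have h2 : ∀ w : V, B w (f v) = 0 := by
        intro w
        obtain ⟨u, hu⟩ := φ.surjective w
        have hk := hkey u v
        rw [hv (f u) ⟨u, rfl⟩] at hk
        have : B (u + f u) (f v) = 0 := by
          rw [map_add, LinearMap.add_apply]
          linear_combination hk
        rw [← hphif u, hu] at this
        exact this
      exact hnd.1 (f v) (fun w => by rw [hsymm]; exact h2 w)
    · intro hv u hu
      obtain ⟨u', rfl⟩ := hu
      have hk := hkey u' v
      rw [hv] at hk
      simpa using hk

  -- orthogonal of a sup is inf of orthogonals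
  have horthsup : ∀ A C : Submodule K V,
      B.orthogonal (A ⊔ C) = B.orthogonal A ⊓ B.orthogonal C := by
    intro A C
    ext v
    simp only [LinearMap.BilinForm.mem_orthogonal_iff, LinearMap.BilinForm.isOrtho_def,
      Submodule.mem_inf]
    constructor
    · intro h
      exact ⟨fun a ha => h a (Submodule.mem_sup_left ha),
        fun c hc => h c (Submodule.mem_sup_right hc)⟩
    · rintro ⟨h1, h2⟩ m hm
      obtain ⟨a, ha, c, hc, rfl⟩ := Submodule.mem_sup.mp hm
      rw [map_add, LinearMap.add_apply, h1 a ha, h2 c hc, add_zero]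
  set W := LinearMap.range f with hW
  set R := LinearMap.ker f ⊔ T with hR
  have horthR : B.orthogonal R = W ⊓ T := by
    rw [hR, horthsup, ← horthW, LinearMap.BilinForm.orthogonal_orthogonal hnd hrefl, hTorth]
  have horthS : B.orthogonal (W ⊓ T) = R := by
    rw [← horthR, LinearMap.BilinForm.orthogonal_orthogonal hnd hrefl]
  set U := Submodule.comap f T with hU
  have hRleU : R ≤ U := by
    rw [hR, hU]
    refine sup_le (fun a ha => ?_) (fun t ht => ?_)
    · simp only [Submodule.mem_comap]
      rw [LinearMap.mem_ker.mp ha]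
      exact T.zero_mem
    · exact hfT t ht
  have hmapU : Submodule.map f U = W ⊓ T := by
    rw [hU, Submodule.map_comap_eq]
  -- dimension facts
  have e1 : Module.finrank K W + Module.finrank K (LinearMap.ker f) = n := by
    rw [hW]
    exact LinearMap.finrank_range_add_finrank_ker f
  have e2 : Module.finrank K (Submodule.map f T)
      + Module.finrank K (LinearMap.ker f ⊓ T : Submodule K V) = Module.finrank K T := by
    have h1 := LinearMap.finrank_range_add_finrank_ker (f ∘ₗ T.subtype)
    have h2 : LinearMap.range (f ∘ₗ T.subtype) = Submodule.map f T := by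
      rw [LinearMap.range_comp, Submodule.range_subtype]
    have h3 : LinearMap.ker (f ∘ₗ T.subtype)
        = Submodule.comap T.subtype (LinearMap.ker f ⊓ T) := by
      ext x
      simp only [LinearMap.mem_ker, LinearMap.coe_comp, Function.comp_apply,
        Submodule.coe_subtype, Submodule.mem_comap, Submodule.mem_inf]
      exact ⟨fun h => ⟨h, x.2⟩, fun h => h.1⟩
    rw [h2, h3, (Submodule.comapSubtypeEquivOfLe
      (inf_le_right : LinearMap.ker f ⊓ T ≤ T)).finrank_eq] at h1
    exact h1
  have hkerleU : LinearMap.ker f ≤ U := le_trans le_sup_left hRleU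
  have e6 : Module.finrank K (W ⊓ T : Submodule K V)
      + Module.finrank K (LinearMap.ker f) = Module.finrank K U := by
    have h1 := LinearMap.finrank_range_add_finrank_ker (f ∘ₗ U.subtype)
    have h2 : LinearMap.range (f ∘ₗ U.subtype) = W ⊓ T := by
      rw [LinearMap.range_comp, Submodule.range_subtype, hmapU]
    have h3 : LinearMap.ker (f ∘ₗ U.subtype)
        = Submodule.comap U.subtype (LinearMap.ker f) := by
      ext x
      simp only [LinearMap.mem_ker, LinearMap.coe_comp, Function.comp_apply,
        Submodule.coe_subtype, Submodule.mem_comap]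
    rw [h2, h3, (Submodule.comapSubtypeEquivOfLe hkerleU).finrank_eq] at h1
    exact h1
  have e3 := Submodule.finrank_sup_add_finrank_inf_eq (LinearMap.ker f) T
  rw [← hR] at e3
  have e5 : Module.finrank K (W ⊓ T : Submodule K V) = n - Module.finrank K R := by
    rw [← horthR, LinearMap.BilinForm.finrank_orthogonal hnd]
  have hRfin : Module.finrank K R ≤ n := Submodule.finrank_le R
  -- a complement of R inside U
  obtain ⟨C', hC'⟩ := Submodule.exists_isCompl (Submodule.comap U.subtype R)
  set C : Submodule K V := Submodule.map U.subtype C' with hC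
  have hCle : C ≤ U := by
    rw [hC]
    exact Submodule.map_subtype_le U C'
  have hmapR : Submodule.map U.subtype (Submodule.comap U.subtype R) = R := by
    rw [Submodule.map_comap_eq, Submodule.range_subtype, inf_eq_right.mpr hRleU]
  have hinj : Function.Injective U.subtype := Submodule.injective_subtype U
  have hCR_inf : C ⊓ R = ⊥ := by
    rw [hC, ← hmapR, ← Submodule.map_inf _ hinj, hC'.symm.disjoint.eq_bot, Submodule.map_bot]
  have hCR_sup : C ⊔ R = U := by
    rw [hC, ← hmapR, ← Submodule.map_sup, hC'.symm.codisjoint.eq_top, Submodule.map_top,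
      Submodule.range_subtype]
  have e7 : Module.finrank K R + Module.finrank K C = Module.finrank K U := by
    have h1 := Submodule.finrank_add_eq_of_isCompl hC'
    rw [(Submodule.comapSubtypeEquivOfLe hRleU).finrank_eq] at h1
    rw [hC, Submodule.finrank_map_subtype_eq]
    exact h1
  -- the alternating form on C
  set Bf : LinearMap.BilinForm K V := B.compl₂ f with hBf
  have hBfapp : ∀ u w : V, Bf u w = B u (f w) := fun u w => rfl
  have hBuf : ∀ u : V, B u (f u) = - Q (f u) := by
    intro u
    rw [hBapp, ← hphif u, hO]
    ring
  have hanti : ∀ u w : V, f u ∈ T → f w ∈ T → B u (f w) = - B w (f u) := by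
    intro u w hu hw
    have hk := hkey u w
    rw [hTzero (f u) hu (f w) hw, hsymm (f u) w] at hk
    linear_combination hk
  have hCU : ∀ c : V, c ∈ C → f c ∈ T := fun c hc => Submodule.mem_comap.mp (hCle hc)
  have hBCalt : (Bf.restrict C).IsAlt := by
    rintro ⟨c, hc⟩
    show Bf c c = 0
    rw [hBfapp, hBuf, hT (f c) (hCU c hc), neg_zero]
  have hBCnd : (Bf.restrict C).Nondegenerate := by
    refine (LinearMap.IsRefl.nondegenerate_iff_separatingLeft hBCalt.isRefl).mpr ?_
    rintro ⟨c, hc⟩ hz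
    have hcr : ∀ r ∈ R, B c (f r) = 0 := by
      intro r hr
      rw [hR] at hr
      obtain ⟨a, ha, t, ht, rfl⟩ := Submodule.mem_sup.mp hr
      rw [map_add, LinearMap.mem_ker.mp ha, zero_add,
        hanti c t (hCU c hc) (hfT t ht), hTzero t ht (f c) (hCU c hc), neg_zero]
    have hcu : ∀ u ∈ U, B c (f u) = 0 := by
      intro u hu
      rw [← hCR_sup] at hu
      obtain ⟨cc, hcc, r, hr, rfl⟩ := Submodule.mem_sup.mp hu
      have h1 : Bf c cc = 0 := hz ⟨cc, hcc⟩
      rw [hBfapp] at h1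
      simp only [map_add]
      rw [h1, hcr r hr, add_zero]
    have hcS : c ∈ B.orthogonal (W ⊓ T) := by
      rw [LinearMap.BilinForm.mem_orthogonal_iff]
      intro s hs
      rw [← hmapU] at hs
      obtain ⟨u, hu, rfl⟩ := Submodule.mem_map.mp hs
      rw [hsymm]
      exact hcu u hu
    have hcR : c ∈ R := horthS ▸ hcS
    have hc0 : c ∈ C ⊓ R := ⟨hc, hcR⟩
    rw [hCR_inf, Submodule.mem_bot] at hc0
    exact Subtype.ext hc0
  have hCeven : Even (Module.finrank K C) :=
    alt_nondeg_even_aux K (Module.finrank K C) C le_rfl (Bf.restrict C) hBCalt hBCnd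
  obtain ⟨m, hm⟩ := hCeven
  have hd : 2 * Module.finrank K T = n := hdim
  refine ⟨m + (Module.finrank K T
    - Module.finrank K (LinearMap.ker f ⊓ T : Submodule K V)), ?_⟩
  omega
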